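/- For the Lie algebra g₃ with [X,Y]=X, the sectional curvature of the plane spanned by orthonormal vectors U = aX+bY+cZ+dW and V = a'X+b'Y+c'Z+d'W equals −(ab'−ba')² ≤ 0, and the scalar curvature is the constant −2. -/

import Mathlib

open Real

abbrev V4 := Fin 4 → ℝ

/-- the inner product making the basis orthonormal -/
def ip (u v : V4) : ℝ := u 0 * v 0 + u 1 * v 1 + u 2 * v 2 + u 3 * v 3

def X : V4 := ![1, 0, 0, 0]
def Y : V4 := ![0, 1, 0, 0]
def Z : V4 := ![0, 0, 1, 0]
def W : V4 := ![0, 0, 0, 1]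

def e : Fin 4 → V4 := ![X, Y, Z, W]

def br (u v : V4) : V4 := (u 0 * v 1 - u 1 * v 0) • X

theorem stmt7 (nabla : V4 → V4 → V4)
    (hK : ∀ u v w : V4, 2 * ip (nabla u v) w = ip (br u v) w - ip (br v w) u + ip (br w u) v)
    (R : V4 → V4 → V4 → V4)
    (hR : ∀ u v w : V4, R u v w = nabla u (nabla v w) - nabla v (nabla u w) - nabla (br u v) w)
    (a b c d a' b' c' d' : ℝ) (u v : V4)
    (hu : u = a • X + b • Y + c • Z + d • W)
    (hv : v = a' • X + b' • Y + c' • Z + d' • W)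
    (huu : ip u u = 1) (hvv : ip v v = 1) (huv : ip u v = 0) :
    ip (R v u u) v / (ip u u * ip v v - ip u v ^ 2) = -((a * b' - b * a') ^ 2) ∧
    ip (R v u u) v / (ip u u * ip v v - ip u v ^ 2) ≤ 0 ∧
    (∑ j : Fin 4, ∑ k : Fin 4, if j ≠ k then ip (R (e k) (e j) (e j)) (e k) / (ip (e j) (e j) * ip (e k) (e k) - ip (e j) (e k) ^ 2) else 0) = -2 := by
  have hn : ∀ p q : V4, nabla p q = ![p 0 * q 1, -(p 0 * q 0), 0, 0] := by
    intro p q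
    funext i
    fin_cases i
    · have h := hK p q X
      simp [ip, br, X, Y, Z, W] at h ⊢
      linarith
    · have h := hK p q Y
      simp [ip, br, X, Y, Z, W] at h ⊢
      linarith
    · have h := hK p q Z
      simp [ip, br, X, Y, Z, W] at h ⊢
      linarith
    · have h := hK p q W
      simp [ip, br, X, Y, Z, W] at h ⊢
      linarith
  have hRf : ∀ p q : V4, ip (R q p p) q = -((p 0 * q 1 - p 1 * q 0)^2) := by
    intro p q
    rw [hR]
    simp only [hn]
    simp [ip, br, X, Y, Z, W]
    ring
  have hu0 : u 0 = a := by simp [hu, X, Y, Z, W]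
  have hu1 : u 1 = b := by simp [hu, X, Y, Z, W]
  have hv0 : v 0 = a' := by simp [hv, X, Y, Z, W]
  have hv1 : v 1 = b' := by simp [hv, X, Y, Z, W]
  have key : ip (R v u u) v / (ip u u * ip v v - ip u v ^ 2) = -((a * b' - b * a') ^ 2) := by
    rw [huu, hvv, huv, hRf, hu0, hu1, hv0, hv1]
    ring
  refine ⟨key, by rw [key]; nlinarith [sq_nonneg (a * b' - b * a')], ?_⟩
  have hsum : ∀ j k : Fin 4, ip (R (e k) (e j) (e j)) (e k) = -(((e j) 0 * (e k) 1 - (e j) 1 * (e k) 0)^2) := fun j k => hRf _ _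
  simp only [Fin.sum_univ_four, hsum]
  simp only [e, ip, X, Y, Z, W, Matrix.cons_val_zero, Matrix.cons_val_one, Matrix.cons_val_two, Matrix.cons_val_three, Matrix.head_cons, Matrix.tail_cons]
  norm_num
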